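/- In the bisection setting below, every nonintersecting pair (x_i, y_j) ∈ E − B has a P-predecessor (x_{i'}, y_j) and a Q-predecessor (x_i, y_{j'}), and moreover the pair of subpaths (P[i,i'−1], Q[j,j'−1]) is nonintersecting. -/

import Mathlib

/-- A leaf-labeled rooted tree: either a labeled leaf, or an internal
vertex with a list of subtrees. -/
inductive ETree (L : Type) : Type where
  | leaf : L → ETree L
  | node : List (ETree L) → ETree L

namespace ETree

variable {L : Type} [DecidableEq L]

/-- The list of leaf labels of a tree. -/
def labelList : ETree L → List L
  | leaf a => [a]
  | node ts => ts.attach.flatMap fun ⟨t, _⟩ => labelList t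

/-- The label set of a tree: the set of its leaf labels. -/
def labelSet (t : ETree L) : Finset L := (labelList t).toFinset

/-- The list of children (as subtrees) of the root of a tree. -/
def children : ETree L → List (ETree L)
  | leaf _ => []
  | node ts => ts

/-- A rooted tree is homeomorphic if every internal vertex has at least two children. -/
inductive Homeo : ETree L → Prop where
  | leaf (a : L) : Homeo (leaf a)
  | node (ts : List (ETree L)) (hlen : 2 ≤ ts.length) (h : ∀ t ∈ ts, Homeo t) :
      Homeo (node ts)

/-- An evolutionary tree: a homeomorphic rooted tree whose leaves carry distinct labels. -/
def IsEvolutionary (t : ETree L) : Prop := Homeo t ∧ (labelList t).Nodup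

/-- `restrict t s` is the homeomorphic version `t‖s` of the tree obtained from `t` by
deleting all leaves with labels outside `s` (contracting away all vertices that are
not leaves or lowest common ancestors of two leaves); `none` if nothing remains. -/
def restrict : ETree L → Finset L → Option (ETree L)
  | leaf a, s => if a ∈ s then some (leaf a) else none
  | node ts, s =>
      match ts.attach.filterMap (fun ⟨t, _⟩ => restrict t s) with
      | [] => none
      | [u] => some u
      | us => some (node us)

/-- Label-preserving isomorphism of leaf-labeled rooted trees. -/
inductive Iso : ETree L → ETree L → Prop where
  | leaf (a : L) : Iso (leaf a) (leaf a)
  | node (ts us : List (ETree L)) (e : Fin ts.length ≃ Fin us.length)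
      (h : ∀ i : Fin ts.length, Iso (ts.get i) (us.get (e i))) :
      Iso (node ts) (node us)

/-- Isomorphism of possibly-empty trees. -/
def IsoO : Option (ETree L) → Option (ETree L) → Prop
  | none, none => True
  | some t, some u => Iso t u
  | _, _ => False

/-- `rr T₁ T₂`: the number of leaves in a maximum agreement subtree of `T₁` and `T₂`,
i.e. the maximum cardinality of a subset `s` of the common labels such that `T₁‖s`
and `T₂‖s` are label-preservingly isomorphic. -/
noncomputable def rr (t₁ t₂ : ETree L) : ℕ :=
  sSup {k | ∃ s : Finset L, s ⊆ labelSet t₁ ∩ labelSet t₂ ∧ s.card = k ∧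
    IsoO (restrict t₁ s) (restrict t₂ s)}

end ETree

namespace ETree

variable {L : Type} [DecidableEq L]

noncomputable instance : DecidableEq (ETree L) := Classical.decEq _

/-- `mm U V`: the maximum weight of a matching of the complete bipartite graph
`(U, V, U×V)` in which the edge `(u,v)` has weight `rr u v` (note that in our
representation a vertex of a tree is identified with the subtree it roots, so the
weight of `(u,v)` is `rr` of the two rooted subtrees). -/
noncomputable def mm (U V : Finset (ETree L)) : ℕ :=
  sSup {w | ∃ M : Finset (ETree L × ETree L),
    (∀ p ∈ M, p.1 ∈ U ∧ p.2 ∈ V) ∧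
    (∀ p ∈ M, ∀ q ∈ M, p ≠ q → p.1 ≠ q.1 ∧ p.2 ≠ q.2) ∧
    w = ∑ p ∈ M, rr p.1 p.2}

/-- `mmb U V x y`: the maximum weight of a matching of the complete bipartite graph
`(U, V, U×V)` (edge `(u,v)` weighted by `rr u v`) that does not use the edge `(x,y)`. -/
noncomputable def mmb (U V : Finset (ETree L)) (x y : ETree L) : ℕ :=
  sSup {w | ∃ M : Finset (ETree L × ETree L),
    (∀ p ∈ M, p.1 ∈ U ∧ p.2 ∈ V) ∧
    (∀ p ∈ M, ∀ q ∈ M, p ≠ q → p.1 ≠ q.1 ∧ p.2 ≠ q.2) ∧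
    (x, y) ∉ M ∧
    w = ∑ p ∈ M, rr p.1 p.2}

/-- `IsSubtree s t`: `s` occurs as a rooted subtree `t^u` of `t` (vertices of a tree
with distinct leaf labels are identified with the subtrees they root). -/
inductive IsSubtree : ETree L → ETree L → Prop where
  | refl (t : ETree L) : IsSubtree t t
  | child {s c : ETree L} {ts : List (ETree L)} (hc : c ∈ ts) (h : IsSubtree s c) :
      IsSubtree s (node ts)

end ETree

/-- A root path `x₁,…,x_len` of a tree: a vertex-simple path starting at the root and
descending, containing no leaf of the tree.  Vertices are identified with the subtrees
they root, so `vert i` is the subtree `S^{xᵢ}` rooted at the `i`-th vertex of the path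
(indices run from `1` to `len`). -/
structure RootPath (L : Type) where
  /-- The ambient tree. -/
  tree : ETree L
  /-- The number of vertices of the path. -/
  len : ℕ
  /-- The subtree rooted at the `i`-th vertex of the path, for `1 ≤ i ≤ len`. -/
  vert : ℕ → ETree L
  len_pos : 1 ≤ len
  first : vert 1 = tree
  /-- The path contains no leaf of the tree. -/
  no_leaf : ∀ i, 1 ≤ i → i ≤ len → ∃ ts, vert i = ETree.node ts
  /-- Each path vertex after the first is a child of the previous one. -/
  step : ∀ i, 1 ≤ i → i < len → vert (i + 1) ∈ (vert i).children

namespace RootPath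

variable {L : Type} [DecidableEq L]

/-- `offPath P i` is the set of children of the path vertex `xᵢ` that are not on the
path (the set `Xᵢ`). -/
noncomputable def offPath (P : RootPath L) (i : ℕ) : Finset (ETree L) :=
  if i < P.len then ((P.vert i).children.toFinset).erase (P.vert (i + 1))
  else (P.vert i).children.toFinset

end RootPath

/-- `Intersecting P Q i j`: the pair `(xᵢ, y_j)` is intersecting, i.e. `S₁^u` and `S₂^v`
share a leaf label for some `u ∈ Xᵢ` and `v ∈ Y_j`. -/
def Intersecting {L : Type} [DecidableEq L] (P Q : RootPath L) (i j : ℕ) : Prop :=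
  ∃ u ∈ P.offPath i, ∃ v ∈ Q.offPath j,
    (ETree.labelSet u ∩ ETree.labelSet v).Nonempty

/-! ### The bisection tree Ψ -/

/-- `RectInter Inter i i' j j'`: the pair of subpaths `(P[i,i'], Q[j,j'])` is
intersecting, i.e. some `(x_a, y_b)` with `a ∈ [i,i']`, `b ∈ [j,j']` is intersecting. -/
def RectInter (Inter : ℕ → ℕ → Prop) (i i' j j' : ℕ) : Prop :=
  ∃ a b, i ≤ a ∧ a ≤ i' ∧ j ≤ b ∧ b ≤ j' ∧ Inter a b

/-- A pair `(P[i,i'], Q[j,j'])` is a leaf of Ψ iff `i = i'`, `j = j'` and `(xᵢ,y_j)` is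
intersecting, or the pair is nonintersecting. -/
def IsLeafPair (Inter : ℕ → ℕ → Prop) (i i' j j' : ℕ) : Prop :=
  (i = i' ∧ j = j' ∧ Inter i j) ∨ ¬ RectInter Inter i i' j j'

/-- The right endpoint `(k₁+k₂−1)/2` of the upper half of the interval `[k₁,k₂]`. -/
def upperHalfHi (k₁ k₂ : ℕ) : ℕ := (k₁ + k₂ - 1) / 2

/-- The left endpoint `(k₁+k₂+1)/2` of the lower half of the interval `[k₁,k₂]`. -/
def lowerHalfLo (k₁ k₂ : ℕ) : ℕ := (k₁ + k₂ + 1) / 2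

/-- `PsiChild Inter c d`: the pair `c = (P[i,i'],Q[j,j'])` is a child in Ψ of the pair
`d`.  A nonleaf pair with `j = j'` has the two children obtained by replacing `P[i,i']`
by its upper and lower halves; a nonleaf pair with `j < j'` has the four children
pairing the upper/lower halves of `P[i,i']` with the upper/lower halves of `Q[j,j']`.
Pairs are quadruples `(i, i', j, j')` of indices. -/
def PsiChild (Inter : ℕ → ℕ → Prop) (c d : ℕ × ℕ × ℕ × ℕ) : Prop :=
  ¬ IsLeafPair Inter d.1 d.2.1 d.2.2.1 d.2.2.2 ∧
  ((d.2.2.1 = d.2.2.2 ∧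
      (c = (d.1, upperHalfHi d.1 d.2.1, d.2.2.1, d.2.2.2) ∨
       c = (lowerHalfLo d.1 d.2.1, d.2.1, d.2.2.1, d.2.2.2))) ∨
   (d.2.2.1 < d.2.2.2 ∧
      (c = (d.1, upperHalfHi d.1 d.2.1, d.2.2.1, upperHalfHi d.2.2.1 d.2.2.2) ∨
       c = (d.1, upperHalfHi d.1 d.2.1, lowerHalfLo d.2.2.1 d.2.2.2, d.2.2.2) ∨
       c = (lowerHalfLo d.1 d.2.1, d.2.1, d.2.2.1, upperHalfHi d.2.2.1 d.2.2.2) ∨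
       c = (lowerHalfLo d.1 d.2.1, d.2.1, lowerHalfLo d.2.2.1 d.2.2.2, d.2.2.2))))

/-- `PsiDesc Inter anc des`: `des` is `anc` itself or a descendant of `anc` in Ψ. -/
def PsiDesc (Inter : ℕ → ℕ → Prop) (anc des : ℕ × ℕ × ℕ × ℕ) : Prop :=
  Relation.ReflTransGen (fun a b => PsiChild Inter b a) anc des

/-- `InPsi Inter p' q' c`: the pair `c` is a node of Ψ, whose root is
`(P[1,p'−1], Q[1,q'−1])`. -/
def InPsi (Inter : ℕ → ℕ → Prop) (p' q' : ℕ) (c : ℕ × ℕ × ℕ × ℕ) : Prop :=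
  PsiDesc Inter (1, p' - 1, 1, q' - 1) c

/-- `IsPsiLeaf Inter p' q' c`: `c` is a leaf of Ψ. -/
def IsPsiLeaf (Inter : ℕ → ℕ → Prop) (p' q' : ℕ) (c : ℕ × ℕ × ℕ × ℕ) : Prop :=
  InPsi Inter p' q' c ∧ IsLeafPair Inter c.1 c.2.1 c.2.2.1 c.2.2.2

/-- `InE Inter p' q' a b`: the pair `(x_a, y_b)` belongs to `E`, the set of all
ceilings `(xᵢ,y_j)`, P-diagonals `(x_{i'+1},y_j)`, Q-diagonals `(xᵢ,y_{j'+1})` and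
floors `(x_{i'+1},y_{j'+1})` of leaves `(P[i,i'],Q[j,j'])` of Ψ. -/
def InE (Inter : ℕ → ℕ → Prop) (p' q' : ℕ) (a b : ℕ) : Prop :=
  ∃ c : ℕ × ℕ × ℕ × ℕ, IsPsiLeaf Inter p' q' c ∧
    ((a, b) = (c.1, c.2.2.1) ∨ (a, b) = (c.2.1 + 1, c.2.2.1) ∨
     (a, b) = (c.1, c.2.2.2 + 1) ∨ (a, b) = (c.2.1 + 1, c.2.2.2 + 1))

/-- `B = {(xᵢ,y_{q'}) : i ∈ [1,p']} ∪ {(x_{p'},y_j) : j ∈ [1,q']}`. -/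
def InB (p' q' : ℕ) (a b : ℕ) : Prop :=
  (b = q' ∧ 1 ≤ a ∧ a ≤ p') ∨ (a = p' ∧ 1 ≤ b ∧ b ≤ q')

/-- `G = G_P ∪ G_Q` where `G_P = {(xᵢ,y₁) : i ∈ [1,p']}` and
`G_Q = {(x₁,y_j) : j ∈ [1,q']}`. -/
def InG (p' q' : ℕ) (a b : ℕ) : Prop :=
  (b = 1 ∧ 1 ≤ a ∧ a ≤ p') ∨ (a = 1 ∧ 1 ≤ b ∧ b ≤ q')

/-- Membership in `G ∪ E ∪ B`. -/
def InGEB (Inter : ℕ → ℕ → Prop) (p' q' : ℕ) (a b : ℕ) : Prop :=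
  InG p' q' a b ∨ InE Inter p' q' a b ∨ InB p' q' a b

namespace Stmt18

/-- Membership of the grid point `(a,b)` in the region of the pair `c`. -/
def Reg (c : ℕ × ℕ × ℕ × ℕ) (a b : ℕ) : Prop :=
  c.1 ≤ a ∧ a ≤ c.2.1 ∧ c.2.2.1 ≤ b ∧ b ≤ c.2.2.2

/-- The dyadic-alignment invariant of Ψ-nodes. -/
def NI (al be : ℕ) (c : ℕ × ℕ × ℕ × ℕ) : Prop :=
  ∃ M N s t : ℕ, N ≤ M ∧ c.1 = s * 2 ^ M + 1 ∧ c.2.1 = (s + 1) * 2 ^ M ∧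
    c.2.2.1 = t * 2 ^ N + 1 ∧ c.2.2.2 = (t + 1) * 2 ^ N ∧
    c.2.1 ≤ 2 ^ al ∧ c.2.2.2 ≤ 2 ^ be

theorem ni_root {al be : ℕ} (h : be ≤ al) : NI al be (1, 2 ^ al, 1, 2 ^ be) :=
  ⟨al, be, 0, 0, h, by simp, by simp, by simp, by simp, le_refl _, le_refl _⟩

/-- Halving arithmetic: the upper half endpoint. -/
theorem upperHalfHi_eq (s M : ℕ) (hM : 1 ≤ M) :
    upperHalfHi (s * 2 ^ M + 1) ((s + 1) * 2 ^ M) = (2 * s + 1) * 2 ^ (M - 1) := by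
  unfold upperHalfHi
  obtain ⟨M', rfl⟩ : ∃ M', M = M' + 1 := ⟨M - 1, by omega⟩
  have : 2 ^ (M' + 1) = 2 * 2 ^ M' := by ring
  simp only [this, Nat.add_sub_cancel]
  have h1 : s * (2 * 2 ^ M') + 1 + (s + 1) * (2 * 2 ^ M')
      = ((2 * s + 1) * 2 ^ M') * 2 + 1 := by ring
  rw [h1, Nat.add_sub_cancel, Nat.mul_div_cancel _ (by norm_num)]

theorem lowerHalfLo_eq (s M : ℕ) (hM : 1 ≤ M) :
    lowerHalfLo (s * 2 ^ M + 1) ((s + 1) * 2 ^ M) = (2 * s + 1) * 2 ^ (M - 1) + 1 := by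
  unfold lowerHalfLo
  obtain ⟨M', rfl⟩ : ∃ M', M = M' + 1 := ⟨M - 1, by omega⟩
  have : 2 ^ (M' + 1) = 2 * 2 ^ M' := by ring
  simp only [this, Nat.add_sub_cancel]
  have h1 : s * (2 * 2 ^ M') + 1 + (s + 1) * (2 * 2 ^ M') + 1
      = ((2 * s + 1) * 2 ^ M' + 1) * 2 := by ring
  rw [h1, Nat.mul_div_cancel _ (by norm_num)]

theorem pow_split {M : ℕ} (hM : 1 ≤ M) : 2 ^ M = 2 * 2 ^ (M - 1) := by
  obtain ⟨M', rfl⟩ : ∃ M', M = M' + 1 := ⟨M - 1, by omega⟩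
  rw [Nat.add_sub_cancel, pow_succ]; ring

theorem reg_mk {a b c d x y : ℕ} :
    Reg (a, b, c, d) x y ↔ a ≤ x ∧ x ≤ b ∧ c ≤ y ∧ y ≤ d := Iff.rfl

/-- A nonleaf node has a nontrivial P-interval. -/
theorem nonleaf_M_pos {Inter : ℕ → ℕ → Prop} {M N s t : ℕ}
    {d : ℕ × ℕ × ℕ × ℕ}
    (h1 : d.1 = s * 2 ^ M + 1) (h2 : d.2.1 = (s + 1) * 2 ^ M)
    (h3 : d.2.2.1 = t * 2 ^ N + 1) (h4 : d.2.2.2 = (t + 1) * 2 ^ N)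
    (hNM : N ≤ M)
    (hnl : ¬ IsLeafPair Inter d.1 d.2.1 d.2.2.1 d.2.2.2) : 1 ≤ M := by
  by_contra hM
  have hM0 : M = 0 := by omega
  have hN0 : N = 0 := by omega
  subst hM0 hN0
  simp only [pow_zero, mul_one] at h1 h2 h3 h4
  apply hnl
  left
  refine ⟨by omega, by omega, ?_⟩
  rcases not_or.mp hnl with ⟨-, hri⟩
  rw [not_not] at hri
  obtain ⟨a, b, ha1, ha2, hb1, hb2, hab⟩ := hri
  have ha : a = d.1 := by omega
  have hb : b = d.2.2.1 := by omega
  subst ha hb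
  exact hab

/-- `j₁ = j₂` for a node iff its Q-exponent is zero. -/
theorem q_exponent_zero {N t x y : ℕ} (h3 : x = t * 2 ^ N + 1) (h4 : y = (t + 1) * 2 ^ N)
    (h : x = y) : N = 0 := by
  by_contra hN
  have h2N : 2 ≤ 2 ^ N := by
    calc 2 = 2 ^ 1 := by norm_num
    _ ≤ 2 ^ N := Nat.pow_le_pow_right (by norm_num) (by omega)
  have : (t + 1) * 2 ^ N = t * 2 ^ N + 2 ^ N := by ring
  omega

theorem q_exponent_pos {N t x y : ℕ} (h3 : x = t * 2 ^ N + 1) (h4 : y = (t + 1) * 2 ^ N)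
    (h : x < y) : 1 ≤ N := by
  by_contra hN
  have hN0 : N = 0 := by omega
  subst hN0
  simp only [pow_zero, mul_one] at h3 h4
  omega

/-- Children: invariant, region inclusion, measure decrease. -/
theorem child_struct {Inter : ℕ → ℕ → Prop} {al be : ℕ} {c d : ℕ × ℕ × ℕ × ℕ}
    (hni : NI al be d) (hch : PsiChild Inter c d) :
    NI al be c ∧ (∀ a b, Reg c a b → Reg d a b) ∧ c.2.1 + 1 - c.1 < d.2.1 + 1 - d.1 := by
  obtain ⟨M, N, s, t, hNM, h1, h2, h3, h4, hb1, hb2⟩ := hni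
  obtain ⟨hnl, hcases⟩ := hch
  have hM : 1 ≤ M := nonleaf_M_pos h1 h2 h3 h4 hNM hnl
  have hps : 2 ^ M = 2 * 2 ^ (M - 1) := pow_split hM
  have hKpos : 0 < 2 ^ (M - 1) := Nat.pow_pos (by norm_num)
  have hup : upperHalfHi d.1 d.2.1 = (2 * s + 1) * 2 ^ (M - 1) := by
    rw [h1, h2]; exact upperHalfHi_eq s M hM
  have hlo : lowerHalfLo d.1 d.2.1 = (2 * s + 1) * 2 ^ (M - 1) + 1 := by
    rw [h1, h2]; exact lowerHalfLo_eq s M hM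
  have e1 : d.1 = (2 * s) * 2 ^ (M - 1) + 1 := by rw [h1, hps]; ring
  have e2 : d.2.1 = (2 * s + 1 + 1) * 2 ^ (M - 1) := by rw [h2, hps]; ring
  have r1 : (2 * s + 1) * 2 ^ (M - 1) = (2 * s) * 2 ^ (M - 1) + 2 ^ (M - 1) := by ring
  have r2 : (2 * s + 1 + 1) * 2 ^ (M - 1) = (2 * s) * 2 ^ (M - 1) + 2 ^ (M - 1) + 2 ^ (M - 1) := by
    ring
  have hup_le : (2 * s + 1) * 2 ^ (M - 1) ≤ 2 ^ al := by
    rw [e2] at hb1; omega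
  have hmeasP : ∀ u v : ℕ, u = (2 * s) * 2 ^ (M - 1) + 1 ∧ v = (2 * s + 1) * 2 ^ (M - 1) ∨
      u = (2 * s + 1) * 2 ^ (M - 1) + 1 ∧ v = (2 * s + 1 + 1) * 2 ^ (M - 1) →
      v + 1 - u < d.2.1 + 1 - d.1 := by
    intro u v huv
    rw [e1, e2]
    rcases huv with ⟨hu, hv⟩ | ⟨hu, hv⟩ <;> omega
  rcases hcases with ⟨hQeq, hc⟩ | ⟨hQlt, hc⟩
  · -- P-only split: here N = 0
    have hN0 : N = 0 := q_exponent_zero h3 h4 hQeq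
    rcases hc with hc | hc <;> subst hc <;> dsimp only
    · exact ⟨⟨M - 1, N, 2 * s, t, by omega, e1, hup, h3, h4, by rw [hup]; exact hup_le, hb2⟩,
        by intro a b hab; rw [reg_mk] at hab; obtain ⟨q1, q2, q3, q4⟩ := hab
           rw [hup] at q2; exact ⟨q1, by omega, q3, q4⟩,
        by rw [hup]; exact hmeasP _ _ (Or.inl ⟨e1, rfl⟩)⟩
    · exact ⟨⟨M - 1, N, 2 * s + 1, t, by omega, hlo, e2, h3, h4, hb1, hb2⟩,
        by intro a b hab; rw [reg_mk] at hab; obtain ⟨q1, q2, q3, q4⟩ := hab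
           rw [hlo] at q1; exact ⟨by rw [e1]; omega, q2, q3, q4⟩,
        by rw [hlo]; exact hmeasP _ _ (Or.inr ⟨rfl, e2⟩)⟩
  · -- P and Q split
    have hN : 1 ≤ N := q_exponent_pos h3 h4 hQlt
    have hqs : 2 ^ N = 2 * 2 ^ (N - 1) := pow_split hN
    have hLpos : 0 < 2 ^ (N - 1) := Nat.pow_pos (by norm_num)
    have huq : upperHalfHi d.2.2.1 d.2.2.2 = (2 * t + 1) * 2 ^ (N - 1) := by
      rw [h3, h4]; exact upperHalfHi_eq t N hN
    have hlq : lowerHalfLo d.2.2.1 d.2.2.2 = (2 * t + 1) * 2 ^ (N - 1) + 1 := by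
      rw [h3, h4]; exact lowerHalfLo_eq t N hN
    have e3 : d.2.2.1 = (2 * t) * 2 ^ (N - 1) + 1 := by rw [h3, hqs]; ring
    have e4 : d.2.2.2 = (2 * t + 1 + 1) * 2 ^ (N - 1) := by rw [h4, hqs]; ring
    have r3 : (2 * t + 1) * 2 ^ (N - 1) = (2 * t) * 2 ^ (N - 1) + 2 ^ (N - 1) := by ring
    have r4 : (2 * t + 1 + 1) * 2 ^ (N - 1)
        = (2 * t) * 2 ^ (N - 1) + 2 ^ (N - 1) + 2 ^ (N - 1) := by ring
    have huq_le : (2 * t + 1) * 2 ^ (N - 1) ≤ 2 ^ be := by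
      rw [e4] at hb2; omega
    rcases hc with hc | hc | hc | hc <;> subst hc <;> dsimp only
    · exact ⟨⟨M - 1, N - 1, 2 * s, 2 * t, by omega, e1, hup, e3, huq,
        by rw [hup]; exact hup_le, by rw [huq]; exact huq_le⟩,
        by intro a b hab; rw [reg_mk] at hab; obtain ⟨q1, q2, q3, q4⟩ := hab
           rw [hup] at q2; rw [huq] at q4
           exact ⟨q1, by omega, q3, by rw [e4]; omega⟩,
        by rw [hup]; exact hmeasP _ _ (Or.inl ⟨e1, rfl⟩)⟩
    · exact ⟨⟨M - 1, N - 1, 2 * s, 2 * t + 1, by omega, e1, hup, hlq, e4,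
        by rw [hup]; exact hup_le, hb2⟩,
        by intro a b hab; rw [reg_mk] at hab; obtain ⟨q1, q2, q3, q4⟩ := hab
           rw [hup] at q2; rw [hlq] at q3
           exact ⟨q1, by omega, by rw [e3]; omega, q4⟩,
        by rw [hup]; exact hmeasP _ _ (Or.inl ⟨e1, rfl⟩)⟩
    · exact ⟨⟨M - 1, N - 1, 2 * s + 1, 2 * t, by omega, hlo, e2, e3, huq,
        hb1, by rw [huq]; exact huq_le⟩,
        by intro a b hab; rw [reg_mk] at hab; obtain ⟨q1, q2, q3, q4⟩ := hab
           rw [hlo] at q1; rw [huq] at q4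
           exact ⟨by rw [e1]; omega, q2, q3, by rw [e4]; omega⟩,
        by rw [hlo]; exact hmeasP _ _ (Or.inr ⟨rfl, e2⟩)⟩
    · exact ⟨⟨M - 1, N - 1, 2 * s + 1, 2 * t + 1, by omega, hlo, e2, hlq, e4,
        hb1, hb2⟩,
        by intro a b hab; rw [reg_mk] at hab; obtain ⟨q1, q2, q3, q4⟩ := hab
           rw [hlo] at q1; rw [hlq] at q3
           exact ⟨by rw [e1]; omega, q2, by rw [e3]; omega, q4⟩,
        by rw [hlo]; exact hmeasP _ _ (Or.inr ⟨rfl, e2⟩)⟩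

/-- The children of a nonleaf node cover its region. -/
theorem children_cover {Inter : ℕ → ℕ → Prop} {al be : ℕ} {d : ℕ × ℕ × ℕ × ℕ}
    (hni : NI al be d) (hnl : ¬ IsLeafPair Inter d.1 d.2.1 d.2.2.1 d.2.2.2)
    {a b : ℕ} (hab : Reg d a b) :
    ∃ c, PsiChild Inter c d ∧ Reg c a b := by
  obtain ⟨M, N, s, t, hNM, h1, h2, h3, h4, hb1, hb2⟩ := hni
  obtain ⟨q1, q2, q3, q4⟩ := hab
  have hM : 1 ≤ M := nonleaf_M_pos h1 h2 h3 h4 hNM hnl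
  have hup : upperHalfHi d.1 d.2.1 = (2 * s + 1) * 2 ^ (M - 1) := by
    rw [h1, h2]; exact upperHalfHi_eq s M hM
  have hlo : lowerHalfLo d.1 d.2.1 = (2 * s + 1) * 2 ^ (M - 1) + 1 := by
    rw [h1, h2]; exact lowerHalfLo_eq s M hM
  rcases Nat.lt_or_ge d.2.2.1 d.2.2.2 with hQ | hQ
  · -- four children
    have hN : 1 ≤ N := q_exponent_pos h3 h4 hQ
    have huq : upperHalfHi d.2.2.1 d.2.2.2 = (2 * t + 1) * 2 ^ (N - 1) := by
      rw [h3, h4]; exact upperHalfHi_eq t N hN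
    have hlq : lowerHalfLo d.2.2.1 d.2.2.2 = (2 * t + 1) * 2 ^ (N - 1) + 1 := by
      rw [h3, h4]; exact lowerHalfLo_eq t N hN
    rcases le_or_gt a ((2 * s + 1) * 2 ^ (M - 1)) with hA | hA <;>
      rcases le_or_gt b ((2 * t + 1) * 2 ^ (N - 1)) with hB | hB
    · refine ⟨_, ⟨hnl, Or.inr ⟨hQ, Or.inl rfl⟩⟩, ?_⟩
      rw [reg_mk, hup, huq]; exact ⟨q1, hA, q3, hB⟩
    · refine ⟨_, ⟨hnl, Or.inr ⟨hQ, Or.inr (Or.inl rfl)⟩⟩, ?_⟩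
      rw [reg_mk, hup, hlq]; exact ⟨q1, hA, by omega, q4⟩
    · refine ⟨_, ⟨hnl, Or.inr ⟨hQ, Or.inr (Or.inr (Or.inl rfl))⟩⟩, ?_⟩
      rw [reg_mk, hlo, huq]; exact ⟨by omega, q2, q3, hB⟩
    · refine ⟨_, ⟨hnl, Or.inr ⟨hQ, Or.inr (Or.inr (Or.inr rfl))⟩⟩, ?_⟩
      rw [reg_mk, hlo, hlq]; exact ⟨by omega, q2, by omega, q4⟩
  · -- two children
    have hQeq : d.2.2.1 = d.2.2.2 := le_antisymm (by omega) hQ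
    rcases le_or_gt a ((2 * s + 1) * 2 ^ (M - 1)) with hA | hA
    · refine ⟨_, ⟨hnl, Or.inl ⟨hQeq, Or.inl rfl⟩⟩, ?_⟩
      rw [reg_mk, hup]; exact ⟨q1, hA, q3, q4⟩
    · refine ⟨_, ⟨hnl, Or.inl ⟨hQeq, Or.inr rfl⟩⟩, ?_⟩
      rw [reg_mk, hlo]; exact ⟨by omega, q2, q3, q4⟩

/-- Distinct children have disjoint regions. -/
theorem children_disjoint {Inter : ℕ → ℕ → Prop} {al be : ℕ} {c₁ c₂ d : ℕ × ℕ × ℕ × ℕ}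
    (hni : NI al be d) (h₁ : PsiChild Inter c₁ d) (h₂ : PsiChild Inter c₂ d)
    {a b : ℕ} (hr₁ : Reg c₁ a b) (hr₂ : Reg c₂ a b) : c₁ = c₂ := by
  obtain ⟨M, N, s, t, hNM, h1, h2, h3, h4, hb1, hb2⟩ := hni
  obtain ⟨hnl, hc₁⟩ := h₁
  obtain ⟨-, hc₂⟩ := h₂
  have hM : 1 ≤ M := nonleaf_M_pos h1 h2 h3 h4 hNM hnl
  have hup : upperHalfHi d.1 d.2.1 = (2 * s + 1) * 2 ^ (M - 1) := by
    rw [h1, h2]; exact upperHalfHi_eq s M hM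
  have hlo : lowerHalfLo d.1 d.2.1 = (2 * s + 1) * 2 ^ (M - 1) + 1 := by
    rw [h1, h2]; exact lowerHalfLo_eq s M hM
  rcases hc₁ with ⟨hQeq, hc₁⟩ | ⟨hQlt, hc₁⟩
  · rcases hc₂ with ⟨-, hc₂⟩ | ⟨hQlt, -⟩
    · rcases hc₁ with hc₁ | hc₁ <;> rcases hc₂ with hc₂ | hc₂ <;> subst hc₁ <;>
        try subst hc₂
      · rfl
      · exfalso
        rw [reg_mk] at hr₁ hr₂
        obtain ⟨-, u2, -, -⟩ := hr₁
        obtain ⟨u1, -, -, -⟩ := hr₂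
        rw [hup] at u2; rw [hlo] at u1; omega
      · exfalso
        rw [reg_mk] at hr₁ hr₂
        obtain ⟨u1, -, -, -⟩ := hr₁
        obtain ⟨-, u2, -, -⟩ := hr₂
        rw [hup] at u2; rw [hlo] at u1; omega
      · rfl
    · omega
  · rcases hc₂ with ⟨hQeq, -⟩ | ⟨-, hc₂⟩
    · omega
    · have hN : 1 ≤ N := q_exponent_pos h3 h4 hQlt
      have huq : upperHalfHi d.2.2.1 d.2.2.2 = (2 * t + 1) * 2 ^ (N - 1) := by
        rw [h3, h4]; exact upperHalfHi_eq t N hN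
      have hlq : lowerHalfLo d.2.2.1 d.2.2.2 = (2 * t + 1) * 2 ^ (N - 1) + 1 := by
        rw [h3, h4]; exact lowerHalfLo_eq t N hN
      rcases hc₁ with hc₁ | hc₁ | hc₁ | hc₁ <;> rcases hc₂ with hc₂ | hc₂ | hc₂ | hc₂ <;>
        subst hc₁ <;> try subst hc₂
      all_goals try rfl
      all_goals exfalso
      all_goals rw [reg_mk] at hr₁ hr₂
      all_goals obtain ⟨u1, u2, u3, u4⟩ := hr₁
      all_goals obtain ⟨v1, v2, v3, v4⟩ := hr₂
      all_goals simp only [hup, hlo, huq, hlq] at u1 u2 u3 u4 v1 v2 v3 v4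
      all_goals omega

section PsiLemmas

variable {Inter : ℕ → ℕ → Prop} {al be : ℕ}

theorem inPsi_trans {c d : ℕ × ℕ × ℕ × ℕ} {p q : ℕ}
    (h : InPsi Inter p q c) (h2 : PsiDesc Inter c d) : InPsi Inter p q d :=
  Relation.ReflTransGen.trans h h2

theorem ni_of_inPsi (hba : be ≤ al) {c : ℕ × ℕ × ℕ × ℕ}
    (h : InPsi Inter (2 ^ al + 1) (2 ^ be + 1) c) : NI al be c := by
  unfold InPsi at h
  induction h with
  | refl =>
    have : ((1 : ℕ), 2 ^ al + 1 - 1, 1, 2 ^ be + 1 - 1) = (1, 2 ^ al, 1, 2 ^ be) := by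
      simp
    rw [this]
    exact ni_root hba
  | tail hsteps hstep ih => exact (child_struct ih hstep).1

theorem desc_reg_sub (hba : be ≤ al) {c d : ℕ × ℕ × ℕ × ℕ} {a b : ℕ}
    (hc : InPsi Inter (2 ^ al + 1) (2 ^ be + 1) c) (h : PsiDesc Inter c d)
    (hreg : Reg d a b) : Reg c a b := by
  induction h with
  | refl => exact hreg
  | tail hsteps hstep ih =>
    exact ih ((child_struct (ni_of_inPsi hba (inPsi_trans hc hsteps)) hstep).2.1 a b hreg)

theorem leaf_exists_aux (hba : be ≤ al) :
    ∀ μ : ℕ, ∀ c : ℕ × ℕ × ℕ × ℕ, InPsi Inter (2 ^ al + 1) (2 ^ be + 1) c →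
    c.2.1 + 1 - c.1 ≤ μ → ∀ a b : ℕ, Reg c a b →
    ∃ l, IsPsiLeaf Inter (2 ^ al + 1) (2 ^ be + 1) l ∧ Reg l a b := by
  intro μ
  induction μ with
  | zero =>
    intro c hc hm a b hreg
    exfalso
    obtain ⟨M, N, s, t, -, h1, h2, -, -, -, -⟩ := ni_of_inPsi hba hc
    have : 0 < 2 ^ M := Nat.pow_pos (by norm_num)
    have : (s + 1) * 2 ^ M = s * 2 ^ M + 2 ^ M := by ring
    omega
  | succ μ ih =>
    intro c hc hm a b hreg
    by_cases hl : IsLeafPair Inter c.1 c.2.1 c.2.2.1 c.2.2.2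
    · exact ⟨c, ⟨hc, hl⟩, hreg⟩
    · obtain ⟨c', hch, hreg'⟩ := children_cover (ni_of_inPsi hba hc) hl hreg
      have hlt := (child_struct (ni_of_inPsi hba hc) hch).2.2
      exact ih c' (hc.tail hch) (by omega) a b hreg'

theorem leaf_unique_aux (hba : be ≤ al) {a b : ℕ} :
    ∀ μ : ℕ, ∀ x l₁ l₂ : ℕ × ℕ × ℕ × ℕ, InPsi Inter (2 ^ al + 1) (2 ^ be + 1) x →
    x.2.1 + 1 - x.1 ≤ μ → PsiDesc Inter x l₁ → PsiDesc Inter x l₂ →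
    IsLeafPair Inter l₁.1 l₁.2.1 l₁.2.2.1 l₁.2.2.2 →
    IsLeafPair Inter l₂.1 l₂.2.1 l₂.2.2.1 l₂.2.2.2 →
    Reg l₁ a b → Reg l₂ a b → l₁ = l₂ := by
  intro μ
  induction μ with
  | zero =>
    intro x l₁ l₂ hx hm _ _ _ _ _ _
    exfalso
    obtain ⟨M, N, s, t, -, h1, h2, -, -, -, -⟩ := ni_of_inPsi hba hx
    have : 0 < 2 ^ M := Nat.pow_pos (by norm_num)
    have : (s + 1) * 2 ^ M = s * 2 ^ M + 2 ^ M := by ring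
    omega
  | succ μ ih =>
    intro x l₁ l₂ hx hm hd₁ hd₂ hl₁ hl₂ hr₁ hr₂
    rcases hd₁.cases_head with rfl | ⟨c₁, hch₁, hd₁'⟩
    · rcases hd₂.cases_head with rfl | ⟨c₂, hch₂, -⟩
      · rfl
      · exact absurd hl₁ hch₂.1
    · rcases hd₂.cases_head with rfl | ⟨c₂, hch₂, hd₂'⟩
      · exact absurd hl₂ hch₁.1
      · have hni := ni_of_inPsi hba hx
        have hreg₁ : Reg c₁ a b := desc_reg_sub hba (hx.tail hch₁) hd₁' hr₁
        have hreg₂ : Reg c₂ a b := desc_reg_sub hba (hx.tail hch₂) hd₂' hr₂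
        have hcc : c₁ = c₂ := children_disjoint hni hch₁ hch₂ hreg₁ hreg₂
        subst hcc
        have hlt := (child_struct hni hch₁).2.2
        exact ih c₁ l₁ l₂ (hx.tail hch₁) (by omega) hd₁' hd₂' hl₁ hl₂ hr₁ hr₂

/-- Shape of leaves. -/
theorem leaf_ni (hba : be ≤ al) {l : ℕ × ℕ × ℕ × ℕ}
    (h : IsPsiLeaf Inter (2 ^ al + 1) (2 ^ be + 1) l) : NI al be l :=
  ni_of_inPsi hba h.1

/-- Every grid point lies in the region of some leaf. -/
theorem leaf_of_point (hba : be ≤ al) {a b : ℕ}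
    (ha1 : 1 ≤ a) (ha2 : a ≤ 2 ^ al) (hb1 : 1 ≤ b) (hb2 : b ≤ 2 ^ be) :
    ∃ l, IsPsiLeaf Inter (2 ^ al + 1) (2 ^ be + 1) l ∧ Reg l a b := by
  have hroot : InPsi Inter (2 ^ al + 1) (2 ^ be + 1) (1, 2 ^ al + 1 - 1, 1, 2 ^ be + 1 - 1) :=
    Relation.ReflTransGen.refl
  refine leaf_exists_aux hba (2 ^ al + 1) _ hroot (by simp) a b ?_
  refine ⟨ha1, ?_, hb1, ?_⟩ <;> simp <;> omega

theorem leaf_unique (hba : be ≤ al) {l₁ l₂ : ℕ × ℕ × ℕ × ℕ} {a b : ℕ}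
    (h₁ : IsPsiLeaf Inter (2 ^ al + 1) (2 ^ be + 1) l₁)
    (h₂ : IsPsiLeaf Inter (2 ^ al + 1) (2 ^ be + 1) l₂)
    (hr₁ : Reg l₁ a b) (hr₂ : Reg l₂ a b) : l₁ = l₂ := by
  have hroot : InPsi Inter (2 ^ al + 1) (2 ^ be + 1) (1, 2 ^ al + 1 - 1, 1, 2 ^ be + 1 - 1) :=
    Relation.ReflTransGen.refl
  exact leaf_unique_aux hba (2 ^ al + 1) _ l₁ l₂ hroot (by simp) h₁.1 h₂.1 h₁.2 h₂.2 hr₁ hr₂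

end PsiLemmas

section LeafLemmas

variable {Inter : ℕ → ℕ → Prop} {al be : ℕ}

theorem leaf_wf (hba : be ≤ al) {l : ℕ × ℕ × ℕ × ℕ}
    (h : IsPsiLeaf Inter (2 ^ al + 1) (2 ^ be + 1) l) :
    1 ≤ l.1 ∧ l.1 ≤ l.2.1 ∧ l.2.1 ≤ 2 ^ al ∧
      1 ≤ l.2.2.1 ∧ l.2.2.1 ≤ l.2.2.2 ∧ l.2.2.2 ≤ 2 ^ be := by
  obtain ⟨M, N, s, t, -, h1, h2, h3, h4, hb1, hb2⟩ := leaf_ni hba h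
  have hM : 0 < 2 ^ M := Nat.pow_pos (by norm_num)
  have hN : 0 < 2 ^ N := Nat.pow_pos (by norm_num)
  have e1 : (s + 1) * 2 ^ M = s * 2 ^ M + 2 ^ M := by ring
  have e2 : (t + 1) * 2 ^ N = t * 2 ^ N + 2 ^ N := by ring
  omega

/-- The P-interval of a leaf is a dyadic interval. -/
theorem leaf_align_P (hba : be ≤ al) {l : ℕ × ℕ × ℕ × ℕ}
    (h : IsPsiLeaf Inter (2 ^ al + 1) (2 ^ be + 1) l) :
    ∃ e, 2 ^ e ∣ l.1 - 1 ∧ l.2.1 = l.1 - 1 + 2 ^ e := by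
  obtain ⟨M, N, s, t, -, h1, h2, -, -, -, -⟩ := leaf_ni hba h
  refine ⟨M, ?_, ?_⟩
  · rw [h1]; simp
  · rw [h1, h2]; have : (s + 1) * 2 ^ M = s * 2 ^ M + 2 ^ M := by ring
    omega

theorem leaf_align_Q (hba : be ≤ al) {l : ℕ × ℕ × ℕ × ℕ}
    (h : IsPsiLeaf Inter (2 ^ al + 1) (2 ^ be + 1) l) :
    ∃ e, 2 ^ e ∣ l.2.2.1 - 1 ∧ l.2.2.2 = l.2.2.1 - 1 + 2 ^ e := by
  obtain ⟨M, N, s, t, -, -, -, h3, h4, -, -⟩ := leaf_ni hba h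
  refine ⟨N, ?_, ?_⟩
  · rw [h3]; simp
  · rw [h3, h4]; have : (t + 1) * 2 ^ N = t * 2 ^ N + 2 ^ N := by ring
    omega

/-- E-membership of the four corners of a leaf. -/
theorem inE_ceiling {l : ℕ × ℕ × ℕ × ℕ} {p q : ℕ}
    (h : IsPsiLeaf Inter p q l) : InE Inter p q l.1 l.2.2.1 :=
  ⟨l, h, Or.inl rfl⟩

theorem inE_pdiag {l : ℕ × ℕ × ℕ × ℕ} {p q : ℕ}
    (h : IsPsiLeaf Inter p q l) : InE Inter p q (l.2.1 + 1) l.2.2.1 :=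
  ⟨l, h, Or.inr (Or.inl rfl)⟩

theorem inE_qdiag {l : ℕ × ℕ × ℕ × ℕ} {p q : ℕ}
    (h : IsPsiLeaf Inter p q l) : InE Inter p q l.1 (l.2.2.2 + 1) :=
  ⟨l, h, Or.inr (Or.inr (Or.inl rfl))⟩

theorem inE_floor {l : ℕ × ℕ × ℕ × ℕ} {p q : ℕ}
    (h : IsPsiLeaf Inter p q l) : InE Inter p q (l.2.1 + 1) (l.2.2.2 + 1) :=
  ⟨l, h, Or.inr (Or.inr (Or.inr rfl))⟩

theorem inE_cases {a b p q : ℕ} (h : InE Inter p q a b) :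
    ∃ l, IsPsiLeaf Inter p q l ∧
      ((a = l.1 ∧ b = l.2.2.1) ∨ (a = l.2.1 + 1 ∧ b = l.2.2.1) ∨
       (a = l.1 ∧ b = l.2.2.2 + 1) ∨ (a = l.2.1 + 1 ∧ b = l.2.2.2 + 1)) := by
  obtain ⟨l, hl, hc⟩ := h
  refine ⟨l, hl, ?_⟩
  have hpair : ∀ x y : ℕ × ℕ, x = y → x.1 = y.1 ∧ x.2 = y.2 := by
    intro x y hxy; exact ⟨congrArg Prod.fst hxy, congrArg Prod.snd hxy⟩
  rcases hc with hc | hc | hc | hc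
  · exact Or.inl (hpair _ _ hc)
  · exact Or.inr (Or.inl (hpair _ _ hc))
  · exact Or.inr (Or.inr (Or.inl (hpair _ _ hc)))
  · exact Or.inr (Or.inr (Or.inr (hpair _ _ hc)))

/-- Horizontal adjacency of distinct leaves. -/
theorem adj_horiz (hba : be ≤ al) {l₁ l₂ : ℕ × ℕ × ℕ × ℕ} {u w : ℕ}
    (h₁ : IsPsiLeaf Inter (2 ^ al + 1) (2 ^ be + 1) l₁)
    (h₂ : IsPsiLeaf Inter (2 ^ al + 1) (2 ^ be + 1) l₂)
    (r₁ : Reg l₁ u w) (r₂ : Reg l₂ (u + 1) w) (hne : l₁ ≠ l₂) :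
    l₁.2.1 = u ∧ l₂.1 = u + 1 := by
  obtain ⟨a1, a2, a3, a4⟩ := r₁
  obtain ⟨b1, b2, b3, b4⟩ := r₂
  constructor
  · by_contra hc
    exact hne (leaf_unique hba h₁ h₂ ⟨by omega, by omega, a3, a4⟩ ⟨b1, b2, b3, b4⟩)
  · by_contra hc
    exact hne (leaf_unique hba h₁ h₂ ⟨a1, a2, a3, a4⟩ ⟨by omega, by omega, b3, b4⟩)

/-- Vertical adjacency of distinct leaves. -/
theorem adj_vert (hba : be ≤ al) {l₁ l₂ : ℕ × ℕ × ℕ × ℕ} {u w : ℕ}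
    (h₁ : IsPsiLeaf Inter (2 ^ al + 1) (2 ^ be + 1) l₁)
    (h₂ : IsPsiLeaf Inter (2 ^ al + 1) (2 ^ be + 1) l₂)
    (r₁ : Reg l₁ u w) (r₂ : Reg l₂ u (w + 1)) (hne : l₁ ≠ l₂) :
    l₁.2.2.2 = w ∧ l₂.2.2.1 = w + 1 := by
  obtain ⟨a1, a2, a3, a4⟩ := r₁
  obtain ⟨b1, b2, b3, b4⟩ := r₂
  constructor
  · by_contra hc
    exact hne (leaf_unique hba h₁ h₂ ⟨a1, a2, by omega, by omega⟩ ⟨b1, b2, b3, b4⟩)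
  · by_contra hc
    exact hne (leaf_unique hba h₁ h₂ ⟨a1, a2, a3, a4⟩ ⟨b1, b2, by omega, by omega⟩)

/-- A leaf containing an intersecting point is that singleton. -/
theorem leaf_of_inter {l : ℕ × ℕ × ℕ × ℕ} {a b p q : ℕ}
    (h : IsPsiLeaf Inter p q l) (hr : Reg l a b) (hab : Inter a b) :
    l = (a, a, b, b) := by
  obtain ⟨hpsi, hlp⟩ := h
  obtain ⟨r1, r2, r3, r4⟩ := hr
  rcases hlp with ⟨e1, e2, hI⟩ | hni
  · have ha : l.1 = a := by omega
    have hb : l.2.2.1 = b := by omega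
    obtain ⟨x1, x2, x3, x4⟩ := l
    simp_all
  · exact absurd ⟨a, b, r1, r2, r3, r4, hab⟩ hni

/-- Any in-grid intersecting point is in `E` (ceiling of its singleton leaf). -/
theorem inter_inE (hba : be ≤ al) {a b : ℕ}
    (ha1 : 1 ≤ a) (ha2 : a ≤ 2 ^ al) (hb1 : 1 ≤ b) (hb2 : b ≤ 2 ^ be)
    (hab : Inter a b) : InE Inter (2 ^ al + 1) (2 ^ be + 1) a b := by
  obtain ⟨l, hl, hr⟩ := leaf_of_point hba ha1 ha2 hb1 hb2 (Inter := Inter)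
  have := leaf_of_inter hl hr hab
  subst this
  exact inE_ceiling hl

/-- The key dyadic misalignment lemma. -/
theorem dyadic_clash {e f u v : ℕ} (hu : 2 ^ e ∣ u) (hv : 2 ^ f ∣ v)
    (h1 : u < v) (h2 : v < u + 2 ^ e) (h3 : v < u + 2 ^ f) : False := by
  rcases le_total e f with h | h
  · have : (2 : ℕ) ^ e ∣ v := dvd_trans (pow_dvd_pow 2 h) hv
    have hdvd : (2 : ℕ) ^ e ∣ v - u := Nat.dvd_sub this hu
    have := Nat.le_of_dvd (by omega) hdvd
    omega
  · have : (2 : ℕ) ^ f ∣ u := dvd_trans (pow_dvd_pow 2 h) hu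
    have hdvd : (2 : ℕ) ^ f ∣ v - u := Nat.dvd_sub hv this
    have := Nat.le_of_dvd (by omega) hdvd
    omega

end LeafLemmas

section MainCtx

/-- Standing context for the main argument. -/
structure Ctx (Inter : ℕ → ℕ → Prop) (al be i j i' j' : ℕ) (l : ℕ × ℕ × ℕ × ℕ) : Prop where
  hba : be ≤ al
  hi1 : 2 ≤ i
  hj1 : 2 ≤ j
  hi2 : i ≤ 2 ^ al
  hj2 : j ≤ 2 ^ be
  hiE : InE Inter (2 ^ al + 1) (2 ^ be + 1) i j
  hii' : i < i'
  hjj' : j < j'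
  hi'ub : i' ≤ 2 ^ al + 1
  hj'ub : j' ≤ 2 ^ be + 1
  hi'min : ∀ c, i < c → InE Inter (2 ^ al + 1) (2 ^ be + 1) c j → i' ≤ c
  hj'min : ∀ r, j < r → InE Inter (2 ^ al + 1) (2 ^ be + 1) i r → j' ≤ r
  hl : IsPsiLeaf Inter (2 ^ al + 1) (2 ^ be + 1) l
  hlreg : Reg l i j

variable {Inter : ℕ → ℕ → Prop} {al be i j i' j' : ℕ} {l : ℕ × ℕ × ℕ × ℕ}

theorem Ctx.F1 (C : Ctx Inter al be i j i' j' l) :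
    ∀ c, i < c → c < i' → ¬ InE Inter (2 ^ al + 1) (2 ^ be + 1) c j :=
  fun c h1 h2 hE => absurd (C.hi'min c h1 hE) (by omega)

theorem Ctx.F2 (C : Ctx Inter al be i j i' j' l) :
    ∀ r, j < r → r < j' → ¬ InE Inter (2 ^ al + 1) (2 ^ be + 1) i r :=
  fun r h1 h2 hE => absurd (C.hj'min r h1 hE) (by omega)

/-- The edge lemma: `(i,j)` is on the left column or the top row of its leaf. -/
theorem Ctx.EL (C : Ctx Inter al be i j i' j' l) : l.1 = i ∨ l.2.2.1 = j := by
  obtain ⟨c₀, hc₀, hcorn⟩ := inE_cases C.hiE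
  have hw := leaf_wf C.hba hc₀
  obtain ⟨r1, r2, r3, r4⟩ := C.hlreg
  rcases hcorn with ⟨e1, e2⟩ | ⟨e1, e2⟩ | ⟨e1, e2⟩ | ⟨e1, e2⟩
  · have hreg₀ : Reg c₀ i j := ⟨by omega, by omega, by omega, by omega⟩
    have heq := leaf_unique C.hba hc₀ C.hl hreg₀ C.hlreg
    left; rw [← heq]; omega
  · left
    by_contra hne
    have hreg' : Reg l (i - 1) j := ⟨by omega, by omega, r3, r4⟩
    have hreg₀ : Reg c₀ (i - 1) j := ⟨by omega, by omega, by omega, by omega⟩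
    have heq := leaf_unique C.hba C.hl hc₀ hreg' hreg₀
    have : l.2.1 = c₀.2.1 := by rw [heq]
    omega
  · right
    by_contra hne
    have hreg' : Reg l i (j - 1) := ⟨r1, r2, by omega, by omega⟩
    have hreg₀ : Reg c₀ i (j - 1) := ⟨by omega, by omega, by omega, by omega⟩
    have heq := leaf_unique C.hba C.hl hc₀ hreg' hreg₀
    have : l.2.2.2 = c₀.2.2.2 := by rw [heq]
    omega
  · by_contra hboth
    push_neg at hboth
    obtain ⟨hn1, hn2⟩ := hboth
    have hreg' : Reg l (i - 1) (j - 1) := ⟨by omega, by omega, by omega, by omega⟩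
    have hreg₀ : Reg c₀ (i - 1) (j - 1) := ⟨by omega, by omega, by omega, by omega⟩
    have heq := leaf_unique C.hba C.hl hc₀ hreg' hreg₀
    have : l.2.1 = c₀.2.1 := by rw [heq]
    omega

/-- Row-walk: a leaf boundary on row `j` strictly inside the span forces the shape of `ℓ`. -/
theorem Ctx.RW (C : Ctx Inter al be i j i' j' l) :
    ∀ c, i ≤ c → c + 1 < i' →
    ∀ Z, IsPsiLeaf Inter (2 ^ al + 1) (2 ^ be + 1) Z → Reg Z c j → Z.2.1 = c →
    l.1 = i ∧ l.2.2.1 < j := by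
  intro c
  induction c using Nat.strong_induction_on with
  | _ c ih =>
    intro hic hci' Z hZ hZreg hZright
    obtain ⟨z1, z2, z3, z4⟩ := hZreg
    have htop : Z.2.2.1 < j := by
      rcases eq_or_lt_of_le z3 with he | h
      · exfalso
        have hE : InE Inter (2 ^ al + 1) (2 ^ be + 1) (c + 1) j := by
          have h' := inE_pdiag hZ
          rwa [hZright, he] at h'
        exact C.F1 (c + 1) (by omega) (by omega) hE
      · exact h
    rcases le_or_gt Z.1 i with hZl | hZl
    · have hreg' : Reg Z i j := ⟨hZl, by omega, by omega, z4⟩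
      have heq := leaf_unique C.hba hZ C.hl hreg' C.hlreg
      have h1 : l.2.2.1 < j := by rw [← heq]; exact htop
      rcases C.EL with h | h
      · exact ⟨h, h1⟩
      · omega
    · have hub := C.hi'ub
      have hii := C.hi1
      obtain ⟨Z', hZ', hZ'reg⟩ :=
        leaf_of_point (Inter := Inter) C.hba (a := Z.1 - 1) (b := j)
          (by omega) (by omega) (by omega) C.hj2
      have hne : Z' ≠ Z := by
        intro hcon
        rw [hcon] at hZ'reg
        obtain ⟨w1, -, -, -⟩ := hZ'reg
        omega
      have hZZ : Reg Z (Z.1 - 1 + 1) j := by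
        have h11 : Z.1 - 1 + 1 = Z.1 := by omega
        rw [h11]
        exact ⟨le_refl _, by omega, by omega, z4⟩
      have hadj := adj_horiz C.hba hZ' hZ hZ'reg hZZ hne
      exact ih (Z.1 - 1) (by omega) (by omega) (by omega) Z' hZ' hZ'reg hadj.1

/-- Column-walk: a leaf boundary on column `i` strictly inside the span forces the shape of `ℓ`. -/
theorem Ctx.CW (C : Ctx Inter al be i j i' j' l) :
    ∀ r, j ≤ r → r + 1 < j' →
    ∀ Z, IsPsiLeaf Inter (2 ^ al + 1) (2 ^ be + 1) Z → Reg Z i r → Z.2.2.2 = r →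
    l.2.2.1 = j ∧ l.1 < i := by
  intro r
  induction r using Nat.strong_induction_on with
  | _ r ih =>
    intro hjr hrj' Z hZ hZreg hZbot
    obtain ⟨z1, z2, z3, z4⟩ := hZreg
    have hleft : Z.1 < i := by
      rcases eq_or_lt_of_le z1 with he | h
      · exfalso
        have hE : InE Inter (2 ^ al + 1) (2 ^ be + 1) i (r + 1) := by
          have h' := inE_qdiag hZ
          rwa [hZbot, he] at h'
        exact C.F2 (r + 1) (by omega) (by omega) hE
      · exact h
    rcases le_or_gt Z.2.2.1 j with hZt | hZt
    · have hreg' : Reg Z i j := ⟨by omega, z2, hZt, by omega⟩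
      have heq := leaf_unique C.hba hZ C.hl hreg' C.hlreg
      have h1 : l.1 < i := by rw [← heq]; exact hleft
      rcases C.EL with h | h
      · omega
      · exact ⟨h, h1⟩
    · have hub := C.hj'ub
      have hjj := C.hj1
      obtain ⟨Z', hZ', hZ'reg⟩ :=
        leaf_of_point (Inter := Inter) C.hba (a := i) (b := Z.2.2.1 - 1)
          (by omega) C.hi2 (by omega) (by omega)
      have hne : Z' ≠ Z := by
        intro hcon
        rw [hcon] at hZ'reg
        obtain ⟨-, -, w3, -⟩ := hZ'reg
        omega
      have hZZ : Reg Z i (Z.2.2.1 - 1 + 1) := by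
        have h11 : Z.2.2.1 - 1 + 1 = Z.2.2.1 := by omega
        rw [h11]
        exact ⟨by omega, z2, le_refl _, by omega⟩
      have hadj := adj_vert C.hba hZ' hZ hZ'reg hZZ hne
      exact ih (Z.2.2.1 - 1) (by omega) (by omega) (by omega) Z' hZ' hZ'reg hadj.1

/-- Vertical alignment interval from the shape `top(ℓ) < j`. -/
theorem Ctx.XV (C : Ctx Inter al be i j i' j' l) (htop : l.2.2.1 < j) :
    ∃ e, 2 ^ e ∣ j - 1 ∧ j' - 1 ≤ j - 1 + 2 ^ e := by
  obtain ⟨c₀, hc₀, hcorn⟩ := inE_cases C.hiE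
  have hw := leaf_wf C.hba hc₀
  have hwl := leaf_wf C.hba C.hl
  obtain ⟨r1, r2, r3, r4⟩ := C.hlreg
  have hP' : ∃ P', IsPsiLeaf Inter (2 ^ al + 1) (2 ^ be + 1) P' ∧
      P'.2.1 = i - 1 ∧ P'.2.2.1 = j ∧ Reg P' (i - 1) j := by
    rcases hcorn with ⟨e1, e2⟩ | ⟨e1, e2⟩ | ⟨e1, e2⟩ | ⟨e1, e2⟩
    · exfalso
      have hreg₀ : Reg c₀ i j := ⟨by omega, by omega, by omega, by omega⟩
      have heq := leaf_unique C.hba hc₀ C.hl hreg₀ C.hlreg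
      have : c₀.2.2.1 = l.2.2.1 := by rw [heq]
      omega
    · exact ⟨c₀, hc₀, by omega, by omega, ⟨by omega, by omega, by omega, by omega⟩⟩
    · exfalso
      have hreg' : Reg l i (j - 1) := ⟨r1, r2, by omega, by omega⟩
      have hreg₀ : Reg c₀ i (j - 1) := ⟨by omega, by omega, by omega, by omega⟩
      have heq := leaf_unique C.hba C.hl hc₀ hreg' hreg₀
      have : l.2.2.2 = c₀.2.2.2 := by rw [heq]
      omega
    · -- floor: build P'' = leaf(i-1, j)
      have hii := C.hi1
      obtain ⟨P'', hP'', hPreg⟩ :=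
        leaf_of_point (Inter := Inter) C.hba (a := i - 1) (b := j)
          (by omega) (by omega) (by omega) C.hj2
      have hne : c₀ ≠ P'' := by
        intro hcon
        rw [← hcon] at hPreg
        obtain ⟨-, -, -, w4⟩ := hPreg
        omega
      have hreg₀ : Reg c₀ (i - 1) (j - 1) := ⟨by omega, by omega, by omega, by omega⟩
      have hPreg' : Reg P'' (i - 1) (j - 1 + 1) := by
        have h11 : j - 1 + 1 = j := by omega
        rw [h11]; exact hPreg
      have hadj := adj_vert C.hba hc₀ hP'' hreg₀ hPreg' hne
      have htopP : P''.2.2.1 = j := by have := hadj.2; omega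
      have hrP : P''.2.1 = i - 1 := by
        obtain ⟨w1, w2, w3, w4⟩ := hPreg
        rcases le_or_gt i P''.2.1 with hge | hlt
        · exfalso
          have hreg'' : Reg P'' i j := ⟨by omega, hge, by omega, by omega⟩
          have heq := leaf_unique C.hba hP'' C.hl hreg'' C.hlreg
          have : P''.2.2.1 = l.2.2.1 := by rw [heq]
          omega
        · omega
      exact ⟨P'', hP'', hrP, htopP, hPreg⟩
  obtain ⟨P', hP'leaf, hPr, hPt, hPreg⟩ := hP'
  obtain ⟨N, hdvd, hbot⟩ := leaf_align_Q C.hba hP'leaf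
  rw [hPt] at hdvd hbot
  refine ⟨N, hdvd, ?_⟩
  -- floor of P' is (i, bot+1) ∈ E; apply F2
  have hfl := inE_floor hP'leaf
  rw [hPr] at hfl
  have h11 : i - 1 + 1 = i := by have := C.hi1; omega
  rw [h11] at hfl
  have hwp := leaf_wf C.hba hP'leaf
  by_contra hcon
  push_neg at hcon
  have hlt : P'.2.2.2 + 1 < j' := by omega
  exact C.F2 (P'.2.2.2 + 1) (by omega) hlt hfl

/-- Horizontal alignment interval from the shape `top(ℓ) = j ∧ left(ℓ) < i`. -/
theorem Ctx.XH (C : Ctx Inter al be i j i' j' l) (htop : l.2.2.1 = j) (hleft : l.1 < i) :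
    ∃ e, 2 ^ e ∣ i - 1 ∧ i' - 1 ≤ i - 1 + 2 ^ e := by
  obtain ⟨c₀, hc₀, hcorn⟩ := inE_cases C.hiE
  have hw := leaf_wf C.hba hc₀
  have hwl := leaf_wf C.hba C.hl
  obtain ⟨r1, r2, r3, r4⟩ := C.hlreg
  have hA : ∃ A, IsPsiLeaf Inter (2 ^ al + 1) (2 ^ be + 1) A ∧
      A.1 = i ∧ A.2.2.2 = j - 1 ∧ Reg A i (j - 1) := by
    rcases hcorn with ⟨e1, e2⟩ | ⟨e1, e2⟩ | ⟨e1, e2⟩ | ⟨e1, e2⟩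
    · exfalso
      have hreg₀ : Reg c₀ i j := ⟨by omega, by omega, by omega, by omega⟩
      have heq := leaf_unique C.hba hc₀ C.hl hreg₀ C.hlreg
      have : c₀.1 = l.1 := by rw [heq]
      omega
    · exfalso
      have hreg' : Reg l (i - 1) j := ⟨by omega, by omega, r3, r4⟩
      have hreg₀ : Reg c₀ (i - 1) j := ⟨by omega, by omega, by omega, by omega⟩
      have heq := leaf_unique C.hba C.hl hc₀ hreg' hreg₀
      have : l.2.1 = c₀.2.1 := by rw [heq]
      omega
    · exact ⟨c₀, hc₀, by omega, by omega, ⟨by omega, by omega, by omega, by omega⟩⟩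
    · -- floor: build A = leaf(i, j-1)
      have hjj := C.hj1
      obtain ⟨A, hA, hAreg⟩ :=
        leaf_of_point (Inter := Inter) C.hba (a := i) (b := j - 1)
          (by omega) C.hi2 (by omega) (by omega)
      have hne : A ≠ l := by
        intro hcon
        rw [hcon] at hAreg
        obtain ⟨-, -, w3, -⟩ := hAreg
        omega
      have hlreg' : Reg l i (j - 1 + 1) := by
        have h11 : j - 1 + 1 = j := by omega
        rw [h11]; exact C.hlreg
      have hadj := adj_vert C.hba hA C.hl hAreg hlreg' hne
      have hbotA : A.2.2.2 = j - 1 := hadj.1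
      have hlA : A.1 = i := by
        obtain ⟨w1, w2, w3, w4⟩ := hAreg
        rcases le_or_gt A.1 (i - 1) with hle | hgt
        · exfalso
          have hregA' : Reg A (i - 1) (j - 1) := ⟨hle, by omega, w3, w4⟩
          have hreg₀ : Reg c₀ (i - 1) (j - 1) := ⟨by omega, by omega, by omega, by omega⟩
          have heq := leaf_unique C.hba hA hc₀ hregA' hreg₀
          have : A.2.1 = c₀.2.1 := by rw [heq]
          omega
        · omega
      exact ⟨A, hA, hlA, hbotA, hAreg⟩
  obtain ⟨A, hAleaf, hAl, hAb, hAreg⟩ := hA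
  obtain ⟨M, hdvd, hr⟩ := leaf_align_P C.hba hAleaf
  rw [hAl] at hdvd hr
  refine ⟨M, hdvd, ?_⟩
  -- floor of A is (right+1, j) ∈ E; apply F1
  have hfl := inE_floor hAleaf
  rw [hAb] at hfl
  have h11 : j - 1 + 1 = j := by have := C.hj1; omega
  rw [h11] at hfl
  have hwa := leaf_wf C.hba hAleaf
  by_contra hcon
  push_neg at hcon
  have hlt : A.2.1 + 1 < i' := by omega
  exact C.F1 (A.2.1 + 1) (by omega) hlt hfl

end MainCtx

section MainO

variable {Inter : ℕ → ℕ → Prop} {al be i j i' j' : ℕ} {l : ℕ × ℕ × ℕ × ℕ}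

/-- Row-walk trigger: a leaf with left edge at column `m` spanning row `j`. -/
theorem Ctx.RWT (C : Ctx Inter al be i j i' j' l) {m : ℕ} (him : i < m) (hmi' : m < i')
    {A : ℕ × ℕ × ℕ × ℕ} (hA : IsPsiLeaf Inter (2 ^ al + 1) (2 ^ be + 1) A)
    (hAm : A.1 = m) (hAreg : Reg A m j) : l.1 = i ∧ l.2.2.1 < j := by
  have hub := C.hi'ub
  have hii := C.hi1
  have hjj := C.hj1
  obtain ⟨Z, hZ, hZreg⟩ :=
    leaf_of_point (Inter := Inter) C.hba (a := m - 1) (b := j)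
      (by omega) (by omega) (by omega) C.hj2
  have hne : Z ≠ A := by
    intro hcon
    rw [hcon] at hZreg
    obtain ⟨w1, -, -, -⟩ := hZreg
    omega
  have hAreg' : Reg A (m - 1 + 1) j := by
    have h11 : m - 1 + 1 = m := by omega
    rw [h11]; exact hAreg
  have hadj := adj_horiz C.hba hZ hA hZreg hAreg' hne
  exact C.RW (m - 1) (by omega) (by omega) Z hZ hZreg hadj.1

/-- Column-walk trigger: a leaf with top edge at row `n` spanning column `i`. -/
theorem Ctx.CWT (C : Ctx Inter al be i j i' j' l) {n : ℕ} (hjn : j < n) (hnj' : n < j')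
    {A : ℕ × ℕ × ℕ × ℕ} (hA : IsPsiLeaf Inter (2 ^ al + 1) (2 ^ be + 1) A)
    (hAn : A.2.2.1 = n) (hAreg : Reg A i n) : l.2.2.1 = j ∧ l.1 < i := by
  have hub := C.hj'ub
  have hjj := C.hj1
  have hii := C.hi1
  obtain ⟨Z, hZ, hZreg⟩ :=
    leaf_of_point (Inter := Inter) C.hba (a := i) (b := n - 1)
      (by omega) C.hi2 (by omega) (by omega)
  have hne : Z ≠ A := by
    intro hcon
    rw [hcon] at hZreg
    obtain ⟨-, -, w3, -⟩ := hZreg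
    omega
  have hAreg' : Reg A i (n - 1 + 1) := by
    have h11 : n - 1 + 1 = n := by omega
    rw [h11]; exact hAreg
  have hadj := adj_vert C.hba hZ hA hZreg hAreg' hne
  exact C.CW (n - 1) (by omega) (by omega) Z hZ hZreg hadj.1

/-- Vertical dyadic clash. -/
theorem Ctx.AV (C : Ctx Inter al be i j i' j' l) {n : ℕ} (hjn : j < n) (hnj' : n < j')
    (htop : l.2.2.1 < j)
    {A : ℕ × ℕ × ℕ × ℕ} (hA : IsPsiLeaf Inter (2 ^ al + 1) (2 ^ be + 1) A)
    (hAt : A.2.2.1 < j) (hAb : A.2.2.2 = n - 1) : False := by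
  obtain ⟨e, hue, hspan⟩ := C.XV htop
  obtain ⟨f, huf, hbot⟩ := leaf_align_Q C.hba hA
  have hwA := leaf_wf C.hba hA
  have hvf : 2 ^ f ∣ n - 1 := by
    rw [← hAb, hbot]; exact Nat.dvd_add huf dvd_rfl
  have hfp : 0 < 2 ^ f := Nat.pow_pos (by norm_num)
  have hjj := C.hj1
  exact dyadic_clash hue hvf (by omega) (by omega) (by omega)

/-- Horizontal dyadic clash. -/
theorem Ctx.AH (C : Ctx Inter al be i j i' j' l) {m : ℕ} (him : i < m) (hmi' : m < i')
    (htop : l.2.2.1 = j) (hleft : l.1 < i)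
    {A : ℕ × ℕ × ℕ × ℕ} (hA : IsPsiLeaf Inter (2 ^ al + 1) (2 ^ be + 1) A)
    (hAl : A.1 < i) (hAr : A.2.1 = m - 1) : False := by
  obtain ⟨e, hue, hspan⟩ := C.XH htop hleft
  obtain ⟨f, huf, hr⟩ := leaf_align_P C.hba hA
  have hwA := leaf_wf C.hba hA
  have hvf : 2 ^ f ∣ m - 1 := by
    rw [← hAr, hr]; exact Nat.dvd_add huf dvd_rfl
  have hfp : 0 < 2 ^ f := Nat.pow_pos (by norm_num)
  have hii := C.hi1
  exact dyadic_clash hue hvf (by omega) (by omega) (by omega)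

/-- **No interior E-point.** -/
theorem Ctx.O (C : Ctx Inter al be i j i' j' l) :
    ∀ n m, i < m → m < i' → j < n → n < j' →
    ¬ InE Inter (2 ^ al + 1) (2 ^ be + 1) m n := by
  have hub1 := C.hi'ub
  have hub2 := C.hj'ub
  have hii := C.hi1
  have hjj := C.hj1
  have hi2 := C.hi2
  have hj2 := C.hj2
  intro n
  induction n using Nat.strong_induction_on with
  | _ n ihn =>
    intro m
    induction m using Nat.strong_induction_on with
    | _ m ihm =>
      intro him hmi' hjn hnj' hE
      have hm2 : m ≤ 2 ^ al := by omega
      have hn2 : n ≤ 2 ^ be := by omega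
      obtain ⟨c₀, hc₀, hcorn⟩ := inE_cases hE
      have hw := leaf_wf C.hba hc₀
      rcases hcorn with ⟨e1, e2⟩ | ⟨e1, e2⟩ | ⟨e1, e2⟩ | ⟨e1, e2⟩
      · -- CEILING: m = c₀.1, n = c₀.2.2.1
        obtain ⟨A₁, hA₁, hA₁reg⟩ :=
          leaf_of_point (Inter := Inter) C.hba (a := m) (b := n - 1)
            (by omega) hm2 (by omega) (by omega)
        have hc₀reg : Reg c₀ m n := ⟨by omega, by omega, by omega, by omega⟩
        have hne₁ : A₁ ≠ c₀ := by
          intro hcon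
          rw [hcon] at hA₁reg
          obtain ⟨-, -, w3, -⟩ := hA₁reg
          omega
        have hc₀reg' : Reg c₀ m (n - 1 + 1) := by
          have h11 : n - 1 + 1 = n := by omega
          rw [h11]; exact hc₀reg
        have hadj₁ := adj_vert C.hba hA₁ hc₀ hA₁reg hc₀reg' hne₁
        have hbot₁ : A₁.2.2.2 = n - 1 := hadj₁.1
        obtain ⟨a1, a2, a3, a4⟩ := hA₁reg
        have hwA₁ := leaf_wf C.hba hA₁
        have hqd : InE Inter (2 ^ al + 1) (2 ^ be + 1) A₁.1 n := by
          have h' := inE_qdiag hA₁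
          rw [hbot₁] at h'
          have h11 : n - 1 + 1 = n := by omega
          rwa [h11] at h'
        rcases lt_trichotomy A₁.1 i with ha | ha | ha
        · -- a < i : CW then XH + A₂ analysis
          have hA₁regi : Reg A₁ i (n - 1) := ⟨by omega, by omega, a3, a4⟩
          obtain ⟨hLt, hLl⟩ := C.CW (n - 1) (by omega) (by omega) A₁ hA₁ hA₁regi hbot₁
          -- A₂ := leaf (m-1, n)
          obtain ⟨A₂, hA₂, hA₂reg⟩ :=
            leaf_of_point (Inter := Inter) C.hba (a := m - 1) (b := n)
              (by omega) (by omega) (by omega) hn2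
          have hne₂ : A₂ ≠ c₀ := by
            intro hcon
            rw [hcon] at hA₂reg
            obtain ⟨w1, -, -, -⟩ := hA₂reg
            omega
          have hc₀regn : Reg c₀ (m - 1 + 1) n := by
            have h11 : m - 1 + 1 = m := by omega
            rw [h11]; exact hc₀reg
          have hadj₂ := adj_horiz C.hba hA₂ hc₀ hA₂reg hc₀regn hne₂
          obtain ⟨b1, b2, b3, b4⟩ := hA₂reg
          have hwA₂ := leaf_wf C.hba hA₂
          have hpd : InE Inter (2 ^ al + 1) (2 ^ be + 1) m A₂.2.2.1 := by
            have h' := inE_pdiag hA₂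
            rw [hadj₂.1] at h'
            have h11 : m - 1 + 1 = m := by omega
            rwa [h11] at h'
          rcases lt_trichotomy A₂.2.2.1 j with ht2 | ht2 | ht2
          · -- t₂ < j
            rcases le_or_gt A₂.1 i with hb | hb
            · have hregl : Reg A₂ i j := ⟨hb, by omega, by omega, by omega⟩
              have heq := leaf_unique C.hba hA₂ C.hl hregl C.hlreg
              have : A₂.2.2.1 = l.2.2.1 := by rw [heq]
              omega
            · have hA₂regj : Reg A₂ A₂.1 j := ⟨le_refl _, by omega, by omega, by omega⟩
              have hRW := C.RWT (m := A₂.1) hb (by omega) hA₂ rfl hA₂regj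
              omega
          · exact C.F1 m him hmi' (by rwa [ht2] at hpd)
          · rcases lt_trichotomy A₂.2.2.1 n with hlt | heqn | hgt
            · exact ihn A₂.2.2.1 hlt m him hmi' ht2 (by omega) hpd
            · have hceil₂ : InE Inter (2 ^ al + 1) (2 ^ be + 1) A₂.1 n := by
                have h' := inE_ceiling hA₂
                rwa [heqn] at h'
              rcases lt_trichotomy A₂.1 i with hb | hb | hb
              · exact C.AH him hmi' hLt hLl hA₂ hb hadj₂.1
              · exact C.F2 n hjn hnj' (by rwa [hb] at hceil₂)
              · exact ihm A₂.1 (by omega) hb (by omega) hjn hnj' hceil₂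
            · omega
        · exact C.F2 n hjn hnj' (by rwa [ha] at hqd)
        · rcases lt_or_eq_of_le a1 with hlt | heqm
          · exact ihm A₁.1 hlt (by omega) (by omega) hjn hnj' hqd
          · have hceil : InE Inter (2 ^ al + 1) (2 ^ be + 1) m A₁.2.2.1 := by
              have h' := inE_ceiling hA₁
              rwa [heqm] at h'
            rcases lt_trichotomy A₁.2.2.1 j with ht | ht | ht
            · have hAregj : Reg A₁ m j := ⟨by omega, a2, by omega, by omega⟩
              have hRW := C.RWT him hmi' hA₁ heqm hAregj
              exact C.AV hjn hnj' hRW.2 hA₁ ht hbot₁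
            · exact C.F1 m him hmi' (by rwa [ht] at hceil)
            · exact ihn A₁.2.2.1 (by omega) m him hmi' ht (by omega) hceil
      · -- P-DIAGONAL: m = c₀.2.1 + 1, n = c₀.2.2.1
        have hceil₀ : InE Inter (2 ^ al + 1) (2 ^ be + 1) c₀.1 n := by
          have h' := inE_ceiling hc₀
          rwa [← e2] at h'
        rcases lt_trichotomy c₀.1 i with hf | hf | hf
        · -- f < i
          have hc₀regi : Reg c₀ i n := ⟨by omega, by omega, by omega, by omega⟩
          obtain ⟨hLt, hLl⟩ := C.CWT hjn hnj' hc₀ e2.symm hc₀regi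
          exact C.AH him hmi' hLt hLl hc₀ hf (by omega)
        · exact C.F2 n hjn hnj' (by rwa [hf] at hceil₀)
        · exact ihm c₀.1 (by omega) hf (by omega) hjn hnj' hceil₀
      · -- Q-DIAGONAL: m = c₀.1, n = c₀.2.2.2 + 1
        have hceil₀ : InE Inter (2 ^ al + 1) (2 ^ be + 1) m c₀.2.2.1 := by
          have h' := inE_ceiling hc₀
          rwa [← e1] at h'
        rcases lt_trichotomy c₀.2.2.1 j with ht | ht | ht
        · -- t < j : RW then ARITH-V
          have hc₀regj : Reg c₀ m j := ⟨by omega, by omega, by omega, by omega⟩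
          have hRW := C.RWT him hmi' hc₀ e1.symm hc₀regj
          exact C.AV hjn hnj' hRW.2 hc₀ ht (by omega)
        · exact C.F1 m him hmi' (by rwa [ht] at hceil₀)
        · exact ihn c₀.2.2.1 (by omega) m him hmi' ht (by omega) hceil₀
      · -- FLOOR: m = c₀.2.1 + 1, n = c₀.2.2.2 + 1
        have hc₀reg : Reg c₀ (m - 1) (n - 1) := ⟨by omega, by omega, by omega, by omega⟩
        -- A₄ := leaf (m, n-1)
        obtain ⟨A₄, hA₄, hA₄reg⟩ :=
          leaf_of_point (Inter := Inter) C.hba (a := m) (b := n - 1)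
            (by omega) hm2 (by omega) (by omega)
        have hne₄ : c₀ ≠ A₄ := by
          intro hcon
          rw [← hcon] at hA₄reg
          obtain ⟨-, w2, -, -⟩ := hA₄reg
          omega
        have hA₄reg' : Reg A₄ (m - 1 + 1) (n - 1) := by
          have h11 : m - 1 + 1 = m := by omega
          rw [h11]; exact hA₄reg
        have hadj₄ := adj_horiz C.hba hc₀ hA₄ hc₀reg hA₄reg' hne₄
        have hlA₄ : A₄.1 = m := by have := hadj₄.2; omega
        obtain ⟨a1, a2, a3, a4⟩ := hA₄reg
        have hwA₄ := leaf_wf C.hba hA₄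
        have hceil₄ : InE Inter (2 ^ al + 1) (2 ^ be + 1) m A₄.2.2.1 := by
          have h' := inE_ceiling hA₄
          rwa [hlA₄] at h'
        rcases lt_trichotomy A₄.2.2.1 j with ht | ht | ht
        · -- t₄ < j : RW conclusion
          have hA₄regj : Reg A₄ m j := ⟨by omega, a2, by omega, by omega⟩
          have hRW := C.RWT him hmi' hA₄ hlA₄ hA₄regj
          -- A₅ := leaf (m-1, n)
          obtain ⟨A₅, hA₅, hA₅reg⟩ :=
            leaf_of_point (Inter := Inter) C.hba (a := m - 1) (b := n)
              (by omega) (by omega) (by omega) hn2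
          have hne₅ : c₀ ≠ A₅ := by
            intro hcon
            rw [← hcon] at hA₅reg
            obtain ⟨-, -, -, w4⟩ := hA₅reg
            omega
          have hA₅reg' : Reg A₅ (m - 1) (n - 1 + 1) := by
            have h11 : n - 1 + 1 = n := by omega
            rw [h11]; exact hA₅reg
          have hadj₅ := adj_vert C.hba hc₀ hA₅ hc₀reg hA₅reg' hne₅
          have htA₅ : A₅.2.2.1 = n := by have := hadj₅.2; omega
          obtain ⟨b1, b2, b3, b4⟩ := hA₅reg
          have hwA₅ := leaf_wf C.hba hA₅
          have hceil₅ : InE Inter (2 ^ al + 1) (2 ^ be + 1) A₅.1 n := by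
            have h' := inE_ceiling hA₅
            rwa [htA₅] at h'
          rcases lt_trichotomy A₅.1 i with hb | hb | hb
          · -- f₅ < i : CW conclusion, clash with RW
            have hA₅regi : Reg A₅ i n := ⟨by omega, by omega, by omega, by omega⟩
            obtain ⟨hLt, -⟩ := C.CWT hjn hnj' hA₅ htA₅ hA₅regi
            omega
          · exact C.F2 n hjn hnj' (by rwa [hb] at hceil₅)
          · exact ihm A₅.1 (by omega) hb (by omega) hjn hnj' hceil₅
        · exact C.F1 m him hmi' (by rwa [ht] at hceil₄)
        · exact ihn A₄.2.2.1 (by omega) m him hmi' ht (by omega) hceil₄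

end MainO

end Stmt18


/-- In the bisection setting, every nonintersecting pair
`(xᵢ,y_j) ∈ E − B` has a P-predecessor `(x_{i'},y_j)` (the smallest `i' > i` with
`(x_{i'},y_j) ∈ G ∪ E ∪ B`) and a Q-predecessor `(xᵢ,y_{j'})` (the smallest `j' > j`
with `(xᵢ,y_{j'}) ∈ G ∪ E ∪ B`), and moreover the pair of subpaths
`(P[i,i'−1], Q[j,j'−1])` is nonintersecting. -/
theorem nonintersecting_predecessors {L : Type} [DecidableEq L] (P Q : RootPath L)
    (hS₁ : ETree.IsEvolutionary P.tree) (hS₂ : ETree.IsEvolutionary Q.tree)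
    (hlab : ETree.labelSet P.tree = ETree.labelSet Q.tree)
    (α β : ℕ) (hα : 1 ≤ α) (hβ : 1 ≤ β)
    (hp : P.len = 2 ^ α + 1) (hq : Q.len = 2 ^ β + 1) (hpq : Q.len ≤ P.len)
    (i j : ℕ)
    (hE : InE (Intersecting P Q) P.len Q.len i j)
    (hB : ¬ InB P.len Q.len i j)
    (hnon : ¬ Intersecting P Q i j) :
    ∃ i', i < i' ∧ InGEB (Intersecting P Q) P.len Q.len i' j ∧
      (∀ k, i < k → InGEB (Intersecting P Q) P.len Q.len k j → i' ≤ k) ∧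
    ∃ j', j < j' ∧ InGEB (Intersecting P Q) P.len Q.len i j' ∧
      (∀ k, j < k → InGEB (Intersecting P Q) P.len Q.len i k → j' ≤ k) ∧
      ¬ RectInter (Intersecting P Q) i (i' - 1) j (j' - 1) := by
  classical
  rw [hp, hq] at hE hB ⊢
  set Inter := Intersecting P Q with hInter
  have hba : β ≤ α := by
    rw [hp, hq] at hpq
    by_contra hcon
    have : 2 ^ α < 2 ^ β := Nat.pow_lt_pow_right (by norm_num) (by omega)
    omega
  -- bounds on i and j
  obtain ⟨c₀, hc₀, hcorn⟩ := Stmt18.inE_cases hE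
  have hw := Stmt18.leaf_wf hba hc₀
  have hi1 : 1 ≤ i := by rcases hcorn with ⟨e, -⟩ | ⟨e, -⟩ | ⟨e, -⟩ | ⟨e, -⟩ <;> omega
  have hj1 : 1 ≤ j := by
    rcases hcorn with ⟨-, e⟩ | ⟨-, e⟩ | ⟨-, e⟩ | ⟨-, e⟩ <;> omega
  have hiub : i ≤ 2 ^ α + 1 := by
    rcases hcorn with ⟨e, -⟩ | ⟨e, -⟩ | ⟨e, -⟩ | ⟨e, -⟩ <;> omega
  have hjub : j ≤ 2 ^ β + 1 := by
    rcases hcorn with ⟨-, e⟩ | ⟨-, e⟩ | ⟨-, e⟩ | ⟨-, e⟩ <;> omega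
  have hi2 : i ≤ 2 ^ α := by
    by_contra hcon
    exact hB (Or.inr ⟨by omega, hj1, hjub⟩)
  have hj2 : j ≤ 2 ^ β := by
    by_contra hcon
    exact hB (Or.inl ⟨by omega, hi1, hiub⟩)
  -- predecessors exist via B
  have hexi : ∃ n, i < n ∧ InGEB Inter (2 ^ α + 1) (2 ^ β + 1) n j :=
    ⟨2 ^ α + 1, by omega, Or.inr (Or.inr (Or.inr ⟨rfl, hj1, hjub⟩))⟩
  have hexj : ∃ n, j < n ∧ InGEB Inter (2 ^ α + 1) (2 ^ β + 1) i n :=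
    ⟨2 ^ β + 1, by omega, Or.inr (Or.inr (Or.inl ⟨rfl, hi1, hiub⟩))⟩
  refine ⟨Nat.find hexi, (Nat.find_spec hexi).1, (Nat.find_spec hexi).2,
    fun k h1 h2 => Nat.find_min' hexi ⟨h1, h2⟩,
    Nat.find hexj, (Nat.find_spec hexj).1, (Nat.find_spec hexj).2,
    fun k h1 h2 => Nat.find_min' hexj ⟨h1, h2⟩, ?_⟩
  set i' := Nat.find hexi with hi'def
  set j' := Nat.find hexj with hj'def
  have hii' : i < i' := (Nat.find_spec hexi).1
  have hjj' : j < j' := (Nat.find_spec hexj).1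
  have hi'min : ∀ k, i < k → InGEB Inter (2 ^ α + 1) (2 ^ β + 1) k j → i' ≤ k :=
    fun k h1 h2 => Nat.find_min' hexi ⟨h1, h2⟩
  have hj'min : ∀ k, j < k → InGEB Inter (2 ^ α + 1) (2 ^ β + 1) i k → j' ≤ k :=
    fun k h1 h2 => Nat.find_min' hexj ⟨h1, h2⟩
  have hi'ub : i' ≤ 2 ^ α + 1 := Nat.find_min' hexi ⟨by omega,
    Or.inr (Or.inr (Or.inr ⟨rfl, hj1, hjub⟩))⟩
  have hj'ub : j' ≤ 2 ^ β + 1 := Nat.find_min' hexj ⟨by omega,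
    Or.inr (Or.inr (Or.inl ⟨rfl, hi1, hiub⟩))⟩
  rintro ⟨k, r, hik, hki', hjr, hrj', hkr⟩
  have hk2 : k ≤ 2 ^ α := by omega
  have hr2 : r ≤ 2 ^ β := by omega
  have hkE : InE Inter (2 ^ α + 1) (2 ^ β + 1) k r :=
    Stmt18.inter_inE hba (by omega) hk2 (by omega) hr2 hkr
  rcases eq_or_lt_of_le hik with hike | hike
  · rcases eq_or_lt_of_le hjr with hjre | hjre
    · exact hnon (by rwa [← hike, ← hjre] at hkr)
    · exact absurd (hj'min r hjre (Or.inr (Or.inl (by rwa [← hike] at hkE)))) (by omega)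
  · rcases eq_or_lt_of_le hjr with hjre | hjre
    · exact absurd (hi'min k hike (Or.inr (Or.inl (by rwa [← hjre] at hkE)))) (by omega)
    · -- interior: use O; first dispose of degenerate i = 1 or j = 1
      rcases eq_or_lt_of_le hj1 with hj1e | hj1e
      · exact absurd (hi'min k hike (Or.inl (Or.inl ⟨hj1e.symm, by omega, by omega⟩)))
          (by omega)
      rcases eq_or_lt_of_le hi1 with hi1e | hi1e
      · exact absurd (hj'min r hjre (Or.inl (Or.inr ⟨hi1e.symm, by omega, by omega⟩)))
          (by omega)
      obtain ⟨l, hl, hlreg⟩ :=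
        Stmt18.leaf_of_point (Inter := Inter) hba hi1 hi2 hj1 hj2
      have C : Stmt18.Ctx Inter α β i j i' j' l :=
        ⟨hba, hi1e, hj1e, hi2, hj2, hE, hii', hjj', hi'ub, hj'ub,
          fun c h1 h2 => hi'min c h1 (Or.inr (Or.inl h2)),
          fun c h1 h2 => hj'min c h1 (Or.inr (Or.inl h2)), hl, hlreg⟩
      exact C.O r k hike (by omega) hjre (by omega) hkE
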